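/- Let a, s₁, s₂ be real numbers, and consider the three bijections of ℂ given by c(z) = z + a, d₁(z) = conj(z) + s₁·i, and d₂(z) = conj(z) + s₂·i (a horizontal translation and reflections in two horizontal lines). Let Γ be the subgroup of the group of bijections of ℂ (Equiv.Perm ℂ) generated by c, d₁, d₂. Then: (1) every γ ∈ Γ with γ ∘ γ = id preserves real parts, i.e. Re(γ(z)) = Re(z) for all z ∈ ℂ; and (2) the subgroup Δ of Γ generated by the set of all such involutions does not act cocompactly on ℂ: there is no compact subset B of ℂ such that the images δ(B), for δ ∈ Δ, cover ℂ. (This is the key step showing that no reflection subgroup of the cusp stabilizer ⟨c, d₂, d₃⟩ acts with finite coarea, so that the commensurator of the Löbell orbifold group Γ(n) is not commensurable with a reflection group.) -/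

import Mathlib

/-- Complex conjugation as a permutation of `ℂ`. -/
noncomputable def conjPerm : Equiv.Perm ℂ :=
  Function.Involutive.toPerm (⇑(starRingEnd ℂ)) (fun z => Complex.conj_conj z)

/-- Translation `z ↦ z + w` as a permutation of `ℂ`. -/
noncomputable def translatePerm (w : ℂ) : Equiv.Perm ℂ := Equiv.addRight w

/-- Reflection in a horizontal line: `z ↦ conj z + s·i`, as a permutation of `ℂ`. -/
noncomputable def reflLine (s : ℝ) : Equiv.Perm ℂ :=
  conjPerm.trans (translatePerm ((s : ℂ) * Complex.I))

/-- The subgroup of permutations `γ` with `Re (γ z) = Re z + Re (γ 0)`. -/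
noncomputable def shiftRe : Subgroup (Equiv.Perm ℂ) where
  carrier := {γ | ∀ z : ℂ, (γ z).re = z.re + (γ 0).re}
  one_mem' := by intro z; simp
  mul_mem' := by
    intro γ δ hγ hδ z
    simp only [Equiv.Perm.mul_apply]
    rw [hγ (δ z), hδ z, hγ (δ 0)]
    ring
  inv_mem' := by
    intro γ hγ z
    have h1 := hγ (γ⁻¹ z)
    have h2 := hγ (γ⁻¹ 0)
    simp only [show ∀ w, γ (γ⁻¹ w) = w from fun w => Equiv.Perm.eq_inv_iff_eq.mp rfl] at h1 h2
    simp only [Complex.zero_re] at h2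
    linarith

/-- The subgroup of permutations preserving real parts. -/
noncomputable def fixRe : Subgroup (Equiv.Perm ℂ) where
  carrier := {γ | ∀ z : ℂ, (γ z).re = z.re}
  one_mem' := by intro z; simp
  mul_mem' := by
    intro γ δ hγ hδ z
    simp only [Equiv.Perm.mul_apply]
    rw [hγ (δ z), hδ z]
  inv_mem' := by
    intro γ hγ z
    have h1 := hγ (γ⁻¹ z)
    simp only [Equiv.Perm.coe_inv, Equiv.apply_symm_apply] at h1
    exact h1.symm

/-- In the group `Γ` generated by the horizontal translation `c(z) = z + a` and the
reflections `d₁(z) = conj z + s₁·i`, `d₂(z) = conj z + s₂·i`: (1) every involution of `Γ`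
preserves real parts, and (2) the subgroup `Δ` generated by the involutions of `Γ` does
not act cocompactly on `ℂ`. -/
theorem stmt_9 (a s₁ s₂ : ℝ) :
    (∀ γ ∈ Subgroup.closure {translatePerm (a : ℂ), reflLine s₁, reflLine s₂},
      γ * γ = 1 → ∀ z : ℂ, (γ z).re = z.re) ∧
    ¬∃ B : Set ℂ, IsCompact B ∧
      (⋃ δ ∈ Subgroup.closure {γ : Equiv.Perm ℂ |
          γ ∈ Subgroup.closure {translatePerm (a : ℂ), reflLine s₁, reflLine s₂} ∧
          γ * γ = 1},
        ⇑δ '' B) = Set.univ := by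
  have htrans : ∀ z : ℂ, translatePerm (a : ℂ) z = z + a := fun z => rfl
  have hrefl : ∀ (s : ℝ) (z : ℂ), reflLine s z = (starRingEnd ℂ) z + s * Complex.I :=
    fun s z => rfl
  have hΓ : Subgroup.closure {translatePerm (a : ℂ), reflLine s₁, reflLine s₂} ≤ shiftRe := by
    rw [Subgroup.closure_le]
    intro γ hγ
    rcases hγ with h | h | h <;> subst h <;> intro z <;>
      simp [htrans, hrefl, Complex.add_re, Complex.mul_re]
  have part1 : ∀ γ ∈ Subgroup.closure {translatePerm (a : ℂ), reflLine s₁, reflLine s₂},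
      γ * γ = 1 → ∀ z : ℂ, (γ z).re = z.re := by
    intro γ hγ hinv z
    have hs : ∀ w : ℂ, (γ w).re = w.re + (γ 0).re := hΓ hγ
    have h0 : (γ (γ 0)).re = (0 : ℂ).re := by rw [← Equiv.Perm.mul_apply, hinv]; rfl
    have h0' : (γ (γ 0)).re = (γ 0).re + (γ 0).re := hs (γ 0)
    have : (γ 0).re = 0 := by
      simp only [Complex.zero_re] at h0; linarith [h0' ▸ h0]
    rw [hs z, this, add_zero]
  refine ⟨part1, ?_⟩
  rintro ⟨B, hB, hcov⟩
  have hΔ : Subgroup.closure {γ : Equiv.Perm ℂ |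
      γ ∈ Subgroup.closure {translatePerm (a : ℂ), reflLine s₁, reflLine s₂} ∧
      γ * γ = 1} ≤ fixRe := by
    rw [Subgroup.closure_le]
    rintro γ ⟨hγ, hinv⟩
    exact part1 γ hγ hinv
  -- Re '' B is bounded above
  have hK : IsCompact (Complex.re '' B) := hB.image Complex.continuous_re
  obtain ⟨M, hM⟩ := hK.bddAbove
  have hmem : ((M + 1 : ℝ) : ℂ) ∈ (Set.univ : Set ℂ) := Set.mem_univ _
  rw [← hcov] at hmem
  simp only [Set.mem_iUnion] at hmem
  obtain ⟨δ, hδ, b, hb, hδb⟩ := hmem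
  have hre : (δ b).re = b.re := hΔ hδ b
  have : ((M + 1 : ℝ) : ℂ).re = b.re := by rw [← hδb, hre]
  rw [Complex.ofReal_re] at this
  have hle : b.re ≤ M := hM ⟨b, hb, rfl⟩
  linarith
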